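/- Let G be a finitely generated group with at least 2 ends, with fixed finite symmetric generating set S. Then there exists N_G ∈ ℕ such that for every n ≥ N_G there exists an n-axial element g ∈ G. -/

import Mathlib

open scoped Pointwise

/-- The Cayley graph of a group with respect to a (symmetric) set `S`:
`g` and `g'` are adjacent when they differ by right multiplication by an element of `S`. -/
def cayley {G : Type*} [Group G] (S : Set G) : SimpleGraph G :=
  SimpleGraph.fromRel (fun g g' => g⁻¹ * g' ∈ S)

/-- `x` and `y` are joined by a walk of `Γ` avoiding the vertex set `K`, i.e. they are in the
same connected component of the graph obtained from `Γ` by deleting the vertices of `K` and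
all incident edges. -/
def ReachAvoid {V : Type*} (Γ : SimpleGraph V) (K : Set V) (x y : V) : Prop :=
  ∃ w : Γ.Walk x y, ∀ v ∈ w.support, v ∉ K

/-- `Separates S B₁ B₀ B₂` : `B₁` separates `B₀` from `B₂`, i.e. `B₀` and `B₂` lie in distinct
connected components of the graph obtained from the Cayley graph of `(G,S)` by deleting the
vertices of `B₁` and all incident edges. -/
def Separates {G : Type*} [Group G] (S : Set G) (B₁ B₀ B₂ : Set G) : Prop :=
  Disjoint B₀ B₁ ∧ Disjoint B₂ B₁ ∧
    ∀ x ∈ B₀, ∀ y ∈ B₂, ¬ ReachAvoid (cayley S) B₁ x y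

/-- The closed ball of radius `n` about `g` in the word metric induced by `S`. -/
def ball {G : Type*} [Group G] (S : Set G) (n : ℕ) (g : G) : Set G :=
  {x : G | (cayley S).dist g x ≤ n}

/-- `G` has at least two ends (with respect to the generating set `S`): for some `n`,
deleting the ball of radius `n` about the identity from the Cayley graph leaves at least
two distinct unbounded (infinite) connected components. -/
def TwoEnds {G : Type*} [Group G] (S : Set G) : Prop :=
  ∃ n : ℕ, ∃ C₁ C₂ : ((cayley S).induce (ball S n 1)ᶜ).ConnectedComponent,
    C₁ ≠ C₂ ∧ C₁.supp.Infinite ∧ C₂.supp.Infinite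

/-- `g` is `n`-axial: for all integers `a < b < c`, the translate `g^b • B(n,1)` separates
`g^a • B(n,1)` from `g^c • B(n,1)`. -/
def IsAxial {G : Type*} [Group G] (S : Set G) (n : ℕ) (g : G) : Prop :=
  ∀ a b c : ℤ, a < b → b < c →
    Separates S (g ^ b • ball S n 1) (g ^ a • ball S n 1) (g ^ c • ball S n 1)

section Basics
variable {G : Type*} [Group G] {S : Set G}

lemma cayley_adj {x y : G} : (cayley S).Adj x y ↔ x ≠ y ∧ (x⁻¹ * y ∈ S ∨ y⁻¹ * x ∈ S) :=
  SimpleGraph.fromRel_adj _ _ _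

/-- Left multiplication as a graph automorphism of the Cayley graph. -/
def cayleyIso (h : G) : cayley S ≃g cayley (S) where
  toEquiv := Equiv.mulLeft h
  map_rel_iff' := by
    intro a b
    show (cayley S).Adj (h * a) (h * b) ↔ (cayley S).Adj a b
    have e1 : (h * a)⁻¹ * (h * b) = a⁻¹ * b := by group
    have e2 : (h * b)⁻¹ * (h * a) = b⁻¹ * a := by group
    rw [cayley_adj, cayley_adj, e1, e2, ne_eq, ne_eq, mul_right_inj]

@[simp] lemma cayleyIso_apply (h x : G) : (cayleyIso (S := S) h) x = h * x := rfl

lemma ReachAvoid.refl {K : Set G} {x : G} (hx : x ∉ K) : ReachAvoid (cayley S) K x x :=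
  ⟨SimpleGraph.Walk.nil, by simpa using hx⟩

lemma ReachAvoid.symm {K : Set G} {x y : G} (h : ReachAvoid (cayley S) K x y) :
    ReachAvoid (cayley S) K y x := by
  obtain ⟨w, hw⟩ := h
  exact ⟨w.reverse, by simpa [SimpleGraph.Walk.support_reverse] using hw⟩

lemma ReachAvoid.trans {K : Set G} {x y z : G} (h : ReachAvoid (cayley S) K x y)
    (h' : ReachAvoid (cayley S) K y z) : ReachAvoid (cayley S) K x z := by
  obtain ⟨w, hw⟩ := h
  obtain ⟨w', hw'⟩ := h'
  refine ⟨w.append w', fun v hv => ?_⟩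
  rcases (SimpleGraph.Walk.mem_support_append_iff _ _).mp hv with hv | hv
  · exact hw v hv
  · exact hw' v hv

lemma ReachAvoid.not_mem_left {V : Type*} {Γ : SimpleGraph V} {K : Set V} {x y : V}
    (h : ReachAvoid Γ K x y) : x ∉ K := by
  obtain ⟨w, hw⟩ := h; exact hw x w.start_mem_support

lemma ReachAvoid.not_mem_right {V : Type*} {Γ : SimpleGraph V} {K : Set V} {x y : V}
    (h : ReachAvoid Γ K x y) : y ∉ K := by
  obtain ⟨w, hw⟩ := h; exact hw y w.end_mem_support

lemma ReachAvoid.mono {V : Type*} {Γ : SimpleGraph V} {K K' : Set V} {x y : V}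
    (hKK : K' ⊆ K) (h : ReachAvoid Γ K x y) : ReachAvoid Γ K' x y := by
  obtain ⟨w, hw⟩ := h; exact ⟨w, fun v hv hvK => hw v hv (hKK hvK)⟩

lemma ReachAvoid.of_mem_support {V : Type*} {Γ : SimpleGraph V} {K : Set V} {x y v : V}
    (h : ReachAvoid Γ K x y) (hv : ∃ w : Γ.Walk x y, (∀ u ∈ w.support, u ∉ K) ∧ v ∈ w.support) :
    True := trivial

/-- every vertex on an avoiding walk is `ReachAvoid`-related to the start. -/
lemma reachAvoid_of_mem_support {V : Type*} {Γ : SimpleGraph V} {K : Set V} {x y v : V}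
    (w : Γ.Walk x y) (hw : ∀ u ∈ w.support, u ∉ K) (hv : v ∈ w.support) :
    ReachAvoid Γ K x v := by
  classical
  exact ⟨w.takeUntil v hv, fun u hu => hw u (w.support_takeUntil_subset hv hu)⟩

/-- Translating a `ReachAvoid` statement by left multiplication. -/
lemma ReachAvoid.smul {K : Set G} {x y : G} (h : G) (hr : ReachAvoid (cayley S) K x y) :
    ReachAvoid (cayley S) (h • K) (h * x) (h * y) := by
  obtain ⟨w, hw⟩ := hr
  refine ⟨w.map (cayleyIso (S := S) h).toHom, fun v hv => ?_⟩
  erw [SimpleGraph.Walk.support_map, List.mem_map] at hv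
  obtain ⟨u, hu, rfl⟩ := hv
  intro hmem
  exact hw u hu (by simpa using (Set.mem_smul_set_iff_inv_smul_mem.mp hmem))

lemma reachAvoid_smul_iff {K : Set G} {x y : G} (h : G) :
    ReachAvoid (cayley S) (h • K) (h * x) (h * y) ↔ ReachAvoid (cayley S) K x y := by
  constructor
  · intro hr
    have := hr.smul (S := S) h⁻¹
    simpa [smul_smul] using this
  · exact fun hr => hr.smul h

end Basics

section Conn
variable {G : Type*} [Group G] {S : Set G}

lemma cayley_reachable_one (hgen : Subgroup.closure S = ⊤) (g : G) :
    (cayley S).Reachable 1 g := by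
  have hg : g ∈ Subgroup.closure S := by rw [hgen]; trivial
  induction hg using Subgroup.closure_induction with
  | mem s hs =>
      by_cases h1 : s = 1
      · subst h1; exact SimpleGraph.Reachable.refl _
      · exact (SimpleGraph.Adj.reachable (by
          rw [cayley_adj]
          exact ⟨fun h => h1 h.symm, Or.inl (by simpa using hs)⟩))
  | one => exact SimpleGraph.Reachable.refl _
  | mul x y hx hy ihx ihy =>
      refine ihx.trans ?_
      obtain ⟨w⟩ := ihy
      exact ⟨(w.map (cayleyIso (S := S) x).toHom).copy (by simp) rfl⟩
  | inv x hx ihx =>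
      obtain ⟨w⟩ := ihx
      exact ⟨((w.map (cayleyIso (S := S) x⁻¹).toHom).copy (by simp) (by simp)).reverse⟩

lemma cayley_connected (hgen : Subgroup.closure S = ⊤) : (cayley S).Connected := by
  rw [SimpleGraph.connected_iff]
  refine ⟨fun x y => ?_, ⟨1⟩⟩
  have hx := cayley_reachable_one hgen x
  have hy := cayley_reachable_one hgen y
  exact hx.symm.trans hy

lemma cayley_dist_smul (h x y : G) :
    (cayley S).dist (h * x) (h * y) = (cayley S).dist x y := by
  have key : ∀ (c a b : G), (cayley S).dist (c * a) (c * b) ≤ (cayley S).dist a b := by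
    intro c a b
    by_cases hr : (cayley S).Reachable a b
    · obtain ⟨p, hp⟩ := hr.exists_walk_length_eq_dist
      calc (cayley S).dist (c * a) (c * b) ≤ (p.map (cayleyIso (S := S) c).toHom).length :=
            SimpleGraph.dist_le _
        _ = (cayley S).dist a b := by rw [SimpleGraph.Walk.length_map, hp]
    · have hr2 : ¬ (cayley S).Reachable (c * a) (c * b) := by
        rintro ⟨w⟩
        exact hr ⟨(w.map (cayleyIso (S := S) c⁻¹).toHom).copy (by simp) (by simp)⟩
      rw [SimpleGraph.dist_eq_zero_of_not_reachable hr, SimpleGraph.dist_eq_zero_of_not_reachable hr2]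
  refine le_antisymm (key h x y) ?_
  have := key h⁻¹ (h * x) (h * y)
  simpa using this

lemma cayley_dist_one_inv (g : G) :
    (cayley S).dist 1 g⁻¹ = (cayley S).dist 1 g := by
  have := cayley_dist_smul (S := S) g⁻¹ 1 g
  rw [SimpleGraph.dist_comm]
  simpa using this

end Conn

section Ball
variable {G : Type*} [Group G] {S : Set G}

lemma one_mem_ball (n : ℕ) : (1 : G) ∈ ball S n 1 := by
  simp [ball, SimpleGraph.dist_self]

lemma ball_mono {n m : ℕ} (h : n ≤ m) : ball S n (1 : G) ⊆ ball S m 1 :=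
  fun x hx => le_trans hx h

lemma mem_smul_ball_iff {g x : G} {n : ℕ} :
    x ∈ g • ball S n 1 ↔ (cayley S).dist g x ≤ n := by
  rw [Set.mem_smul_set_iff_inv_smul_mem]
  show (cayley S).dist 1 (g⁻¹ * x) ≤ n ↔ _
  rw [← cayley_dist_smul (S := S) g 1 (g⁻¹ * x)]
  simp

/-- A ball is "internally connected": from the center one can reach any point staying inside. -/
lemma ball_walk (hgen : Subgroup.closure S = ⊤) {n : ℕ} {x : G} (hx : x ∈ ball S n 1) :
    ∃ p : (cayley S).Walk 1 x, ∀ v ∈ p.support, v ∈ ball S n 1 := by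
  classical
  obtain ⟨p, hp⟩ := ((cayley_connected hgen) 1 x).exists_walk_length_eq_dist
  refine ⟨p, fun v hv => ?_⟩
  have h1 : (cayley S).dist 1 v ≤ (p.takeUntil v hv).length := SimpleGraph.dist_le _
  have h2 := p.length_takeUntil_le hv
  have h3 : p.length ≤ n := by rw [hp]; exact hx
  exact le_trans h1 (le_trans h2 h3)

lemma smul_ball_reachAvoid (hgen : Subgroup.closure S = ⊤) {n : ℕ} {g u : G}
    (hdisj : Disjoint (g • ball S n 1) (ball S n 1)) (hu : u ∈ g • ball S n 1) :
    u ∉ ball S n 1 ∧ ReachAvoid (cayley S) (ball S n 1) u g := by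
  refine ⟨fun hK => Set.disjoint_left.mp hdisj hu hK, ?_⟩
  obtain ⟨b, hb, rfl⟩ := hu
  obtain ⟨p, hp⟩ := ball_walk hgen hb
  refine ReachAvoid.symm ⟨(p.map (cayleyIso (S := S) g).toHom).copy (by simp) rfl, ?_⟩
  intro v hv
  erw [SimpleGraph.Walk.support_copy, SimpleGraph.Walk.support_map, List.mem_map] at hv
  obtain ⟨w, hw, rfl⟩ := hv
  exact Set.disjoint_left.mp hdisj ⟨w, hp w hw, rfl⟩

end Ball

section Finiteness
variable {G : Type*} [Group G] {S : Set G}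

lemma ball_finite (hS : S.Finite) (hgen : Subgroup.closure S = ⊤) (n : ℕ) :
    (ball S n (1 : G)).Finite := by
  induction n with
  | zero =>
      refine (Set.finite_singleton (1 : G)).subset ?_
      intro x hx
      have : (cayley S).dist 1 x = 0 := Nat.le_zero.mp hx
      have := ((cayley_connected hgen).dist_eq_zero_iff).mp this
      simp [this.symm]
  | succ n ih =>
      refine ((ih.mul ((hS.union hS.inv).union (Set.finite_singleton 1)))).subset ?_
      intro x hx
      by_cases hn : (cayley S).dist 1 x ≤ n
      · exact ⟨x, hn, 1, by simp, mul_one x⟩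
      · have hd : (cayley S).dist 1 x = n + 1 := le_antisymm hx (not_le.mp hn)
        have hne : x ≠ 1 := by
          intro h; subst h; rw [SimpleGraph.dist_self] at hd; omega
        obtain ⟨p, hp⟩ := ((cayley_connected hgen) 1 x).exists_walk_length_eq_dist
        obtain ⟨w, hadj, p', hps⟩ := SimpleGraph.Walk.exists_eq_cons_of_ne hne p.reverse
        have hl : p'.length = n := by
          have := congrArg SimpleGraph.Walk.length hps
          rw [SimpleGraph.Walk.length_reverse, hp, hd] at this
          simpa using this.symm
        have hw : w ∈ ball S n (1 : G) := by
          have : (cayley S).dist w 1 ≤ n := by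
            rw [← hl]; exact SimpleGraph.dist_le p'
          rwa [SimpleGraph.dist_comm] at this
        refine ⟨w, hw, w⁻¹ * x, ?_, by group⟩
        left
        rcases (cayley_adj.mp hadj).2 with hs | hs
        · right; simpa using Set.inv_mem_inv.mpr hs
        · left; exact hs

lemma exists_far {C : Set G} (hC : C.Infinite) (hS : S.Finite)
    (hgen : Subgroup.closure S = ⊤) (R : ℕ) : ∃ x ∈ C, R < (cayley S).dist 1 x := by
  obtain ⟨x, hxC, hx⟩ := hC.exists_notMem_finite (ball_finite hS hgen R)
  exact ⟨x, hxC, not_le.mp hx⟩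

lemma smul_ball_disjoint (hgen : Subgroup.closure S = ⊤) {n : ℕ} {g : G}
    (hfar : 2 * n < (cayley S).dist 1 g) : Disjoint (g • ball S n 1) (ball S n (1 : G)) := by
  rw [Set.disjoint_left]
  intro x hx1 hx2
  have h1 : (cayley S).dist g x ≤ n := mem_smul_ball_iff.mp hx1
  have h2 : (cayley S).dist 1 x ≤ n := hx2
  have := (cayley_connected hgen).dist_triangle (u := (1 : G)) (v := x) (w := g)
  rw [SimpleGraph.dist_comm (u := x) (v := g)] at this
  omega

lemma not_mem_ball_of_far (hgen : Subgroup.closure S = ⊤) {n : ℕ} {g : G}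
    (hfar : 2 * n < (cayley S).dist 1 g) : g ∉ ball S n (1 : G) ∧ g⁻¹ ∉ ball S n (1 : G) := by
  constructor
  · intro h; have : (cayley S).dist 1 g ≤ n := h; omega
  · intro h
    have : (cayley S).dist 1 g⁻¹ ≤ n := h
    rw [cayley_dist_one_inv] at this; omega

end Finiteness

section Trunc
variable {G : Type*} [Group G] {S : Set G}

/-- From a walk entering `K`, extract a frontier edge with the pre-frontier part avoiding `K`. -/
lemma trunc {K : Set G} {y : G} (hy : y ∈ K) :
    ∀ {x : G} (_ : (cayley S).Walk x y) (_ : x ∉ K),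
      ∃ v z, v ∉ K ∧ z ∈ K ∧ (cayley S).Adj v z ∧ ReachAvoid (cayley S) K x v := by
  intro x p
  induction p with
  | nil => intro hx; exact absurd hy hx
  | @cons a m c ha p ih =>
      intro hx
      have hyc : c ∈ K := hy
      by_cases hm : m ∈ K
      · exact ⟨a, m, hx, hm, ha, ReachAvoid.refl hx⟩
      · obtain ⟨v, z, hv, hz, hadj, hr⟩ := ih hyc hm
        refine ⟨v, z, hv, hz, hadj, ReachAvoid.trans ?_ hr⟩
        exact ⟨SimpleGraph.Walk.cons ha SimpleGraph.Walk.nil, by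
          intro u hu
          simp only [SimpleGraph.Walk.support_cons, SimpleGraph.Walk.support_nil,
            List.mem_cons, List.mem_singleton] at hu
          rcases hu with rfl | hu
          · exact hx
          · rcases hu with rfl | h
            · exact hm
            · simp at h⟩

end Trunc

section Swallow
variable {G : Type*} [Group G] {S : Set G}

/-- Everything outside the `ReachAvoid`-class of `h` (mod the ball `K`) lies in the
component of `1` after deleting `h • K`. -/
lemma swallow (hgen : Subgroup.closure S = ⊤) {n : ℕ} {h : G}
    (hfar : 2 * n < (cayley S).dist 1 h) :
    ∀ w, w ∉ h • ball S n 1 →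
      (w ∈ ball S n 1 ∨ ¬ ReachAvoid (cayley S) (ball S n 1) w h) →
      ReachAvoid (cayley S) (h • ball S n 1) w 1 := by
  set K := ball S n (1 : G) with hKdef
  have hdisj : Disjoint (h • K) K := smul_ball_disjoint hgen hfar
  have hclass : ∀ u ∈ h • K, u ∉ K ∧ ReachAvoid (cayley S) K u h :=
    fun u hu => smul_ball_reachAvoid hgen hdisj hu
  have inK : ∀ w ∈ K, ReachAvoid (cayley S) (h • K) w 1 := by
    intro w hw
    obtain ⟨p, hp⟩ := ball_walk hgen hw
    exact ReachAvoid.symm ⟨p, fun v hv => Set.disjoint_right.mp hdisj (hp v hv)⟩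
  intro w hwK hcase
  rcases hcase with hw | hw
  · exact inK w hw
  · by_cases hwK' : w ∈ K
    · exact inK w hwK'
    · have hreach : ∃ p : (cayley S).Walk w 1, True := ⟨((cayley_connected hgen) w 1).some, trivial⟩
      obtain ⟨p, -⟩ := hreach
      obtain ⟨v, z, hv, hz, hadj, hr⟩ := trunc (one_mem_ball n) p hwK'
      have claimA : ∀ u, ReachAvoid (cayley S) K w u → u ∉ h • K := by
        intro u hu hmem
        exact hw (hu.trans (hclass u hmem).2)
      have piece1 : ReachAvoid (cayley S) (h • K) w v := by
        obtain ⟨q, hq⟩ := hr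
        exact ⟨q, fun u hu => claimA u (reachAvoid_of_mem_support q hq hu)⟩
      have piece2 : ReachAvoid (cayley S) (h • K) v z := by
        refine ⟨SimpleGraph.Walk.cons hadj SimpleGraph.Walk.nil, ?_⟩
        intro u hu
        simp only [SimpleGraph.Walk.support_cons, SimpleGraph.Walk.support_nil,
          List.mem_cons, List.mem_singleton] at hu
        rcases hu with rfl | hu
        · exact claimA u hr
        · rcases hu with rfl | hfalse
          · exact Set.disjoint_right.mp hdisj hz
          · simp at hfalse
      exact (piece1.trans piece2).trans (inK z hz)

variable (S) in
/-- The key one-sided push: if `¬ ReachAvoid K g g⁻¹`, multiplying by `g` maps the class of `g`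
into itself. -/
lemma key_pos (hgen : Subgroup.closure S = ⊤) {n : ℕ} {g : G}
    (hfar : 2 * n < (cayley S).dist 1 g)
    (hngg : ¬ ReachAvoid (cayley S) (ball S n 1) g g⁻¹) :
    ∀ v, ReachAvoid (cayley S) (ball S n 1) v g →
      g * v ∉ ball S n 1 ∧ ReachAvoid (cayley S) (ball S n 1) (g * v) g := by
  set K := ball S n (1 : G) with hKdef
  intro v hvg
  by_contra hcon
  have hcase : g * v ∈ K ∨ ¬ ReachAvoid (cayley S) K (g * v) g := by tauto
  have hvnK : v ∉ K := hvg.not_mem_left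
  have hwgK : g * v ∉ g • K := by
    rintro ⟨b, hb, hbe⟩
    exact hvnK (by
      have : b = v := by
        have := hbe; simp only [smul_eq_mul] at this
        exact mul_left_cancel this
      exact this ▸ hb)
  have hsw := swallow hgen hfar (g * v) hwgK hcase
  have : ReachAvoid (cayley S) (g • K) (g * v) (g * g⁻¹) := by
    rw [mul_inv_cancel]; exact hsw
  have hvginv : ReachAvoid (cayley S) K v g⁻¹ := (reachAvoid_smul_iff g).mp this
  exact hngg ((hvg.symm).trans hvginv)

variable (S) in
lemma key_neg (hgen : Subgroup.closure S = ⊤) {n : ℕ} {g : G}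
    (hfar : 2 * n < (cayley S).dist 1 g)
    (hngg : ¬ ReachAvoid (cayley S) (ball S n 1) g g⁻¹) :
    ∀ v, (v ∈ ball S n 1 ∨ (v ∉ ball S n 1 ∧ ¬ ReachAvoid (cayley S) (ball S n 1) v g)) →
      g⁻¹ * v ∉ ball S n 1 ∧ ¬ ReachAvoid (cayley S) (ball S n 1) (g⁻¹ * v) g := by
  set K := ball S n (1 : G) with hKdef
  have hdisj : Disjoint (g • K) K := smul_ball_disjoint hgen hfar
  have hclass : ∀ u ∈ g • K, u ∉ K ∧ ReachAvoid (cayley S) K u g :=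
    fun u hu => smul_ball_reachAvoid hgen hdisj hu
  intro v hv
  have h1 : g⁻¹ * v ∉ K := by
    intro hmem
    have hvg : v ∈ g • K := ⟨g⁻¹ * v, hmem, by simp⟩
    have := hclass v hvg
    tauto
  refine ⟨h1, fun hR => ?_⟩
  have := key_pos S hgen hfar hngg (g⁻¹ * v) hR
  rw [mul_inv_cancel_left] at this
  tauto

end Swallow

section Axial
variable {G : Type*} [Group G] {S : Set G}

lemma Separates.smul {B₁ B₀ B₂ : Set G} (h : G) (hsep : Separates S B₁ B₀ B₂) :
    Separates S (h • B₁) (h • B₀) (h • B₂) := by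
  obtain ⟨d1, d2, hw⟩ := hsep
  refine ⟨?_, ?_, ?_⟩
  · rw [Set.disjoint_left]
    rintro x ⟨a, ha, rfl⟩ hmem
    exact Set.disjoint_left.mp d1 ha (Set.smul_mem_smul_set_iff.mp hmem)
  · rw [Set.disjoint_left]
    rintro x ⟨a, ha, rfl⟩ hmem
    exact Set.disjoint_left.mp d2 ha (Set.smul_mem_smul_set_iff.mp hmem)
  · rintro x ⟨a, ha, rfl⟩ y ⟨b, hb, rfl⟩ hR
    have : ReachAvoid (cayley S) (h • B₁) (h * a) (h * b) := by simpa using hR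
    exact hw a ha b hb ((reachAvoid_smul_iff h).mp this)

lemma pos_pow (hgen : Subgroup.closure S = ⊤) {n : ℕ} {g : G}
    (hfar : 2 * n < (cayley S).dist 1 g)
    (hngg : ¬ ReachAvoid (cayley S) (ball S n 1) g g⁻¹) :
    ∀ j : ℕ, ∀ u ∈ g ^ (j + 1) • ball S n 1,
      u ∉ ball S n 1 ∧ ReachAvoid (cayley S) (ball S n 1) u g := by
  intro j
  induction j with
  | zero =>
      intro u hu
      rw [pow_one] at hu
      exact smul_ball_reachAvoid hgen (smul_ball_disjoint hgen hfar) hu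
  | succ j ih =>
      intro u hu
      rw [pow_succ', mul_smul] at hu
      obtain ⟨v, hv, rfl⟩ := hu
      have hv' := ih v hv
      have := key_pos S hgen hfar hngg v hv'.2
      simpa using this

lemma negPowBall (hgen : Subgroup.closure S = ⊤) {n : ℕ} {g : G}
    (hfar : 2 * n < (cayley S).dist 1 g)
    (hngg : ¬ ReachAvoid (cayley S) (ball S n 1) g g⁻¹) :
    ∀ i : ℕ, ∀ u ∈ (g⁻¹) ^ (i + 1) • ball S n 1,
      u ∉ ball S n 1 ∧ ¬ ReachAvoid (cayley S) (ball S n 1) u g := by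
  intro i
  induction i with
  | zero =>
      intro u hu
      rw [pow_one] at hu
      obtain ⟨v, hv, rfl⟩ := hu
      have := key_neg S hgen hfar hngg v (Or.inl hv)
      simpa using this
  | succ i ih =>
      intro u hu
      rw [pow_succ', mul_smul] at hu
      obtain ⟨v, hv, rfl⟩ := hu
      have hv' := ih v hv
      have := key_neg S hgen hfar hngg v (Or.inr hv')
      simpa using this

lemma isAxial_of (hgen : Subgroup.closure S = ⊤) {n : ℕ} {g : G}
    (hfar : 2 * n < (cayley S).dist 1 g)
    (hngg : ¬ ReachAvoid (cayley S) (ball S n 1) g g⁻¹) :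
    IsAxial S n g := by
  intro a b c hab hbc
  have base : Separates S (ball S n 1) (g ^ (a - b) • ball S n 1) (g ^ (c - b) • ball S n 1) := by
    obtain ⟨i, hi⟩ : ∃ i : ℕ, a - b = -((i : ℤ) + 1) := ⟨(b - a - 1).toNat, by omega⟩
    obtain ⟨j, hj⟩ : ∃ j : ℕ, c - b = (j : ℤ) + 1 := ⟨(c - b - 1).toNat, by omega⟩
    have e1 : g ^ (a - b) = (g⁻¹) ^ (i + 1) := by
      rw [hi]
      have : -((i : ℤ) + 1) = -((i + 1 : ℕ) : ℤ) := by push_cast; ring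
      rw [this, zpow_neg, zpow_natCast, inv_pow]
    have e2 : g ^ (c - b) = g ^ (j + 1) := by
      rw [hj]
      have : (j : ℤ) + 1 = ((j + 1 : ℕ) : ℤ) := by push_cast; ring
      rw [this, zpow_natCast]
    rw [e1, e2]
    have hneg := negPowBall hgen hfar hngg i
    have hpos := pos_pow hgen hfar hngg j
    refine ⟨?_, ?_, ?_⟩
    · rw [Set.disjoint_left]; exact fun x hx => (hneg x hx).1
    · rw [Set.disjoint_left]; exact fun x hx => (hpos x hx).1
    · intro x hx y hy hR
      exact (hneg x hx).2 (hR.trans (hpos y hy).2)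
  have := base.smul (g ^ b)
  have eb : ∀ m : ℤ, g ^ b • g ^ (m - b) • ball S n 1 = g ^ m • ball S n 1 := by
    intro m
    rw [smul_smul, ← zpow_add]
    congr 2
    ring
  rwa [eb a, eb c] at this

end Axial

section Ends
variable {G : Type*} [Group G] {S : Set G}

/-- A walk in the induced graph on `Kᶜ` yields a `ReachAvoid` statement. -/
lemma reachAvoid_of_induce_walk {K : Set G} :
    ∀ {a b : ↥(Kᶜ)} (_ : ((cayley S).induce Kᶜ).Walk a b), ReachAvoid (cayley S) K ↑a ↑b := by
  intro a b p
  induction p with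
  | @nil u => exact ReachAvoid.refl u.2
  | @cons a m c ha p ih =>
      have ha' : (cayley S).Adj ↑a ↑m := ha
      exact ReachAvoid.trans ⟨SimpleGraph.Walk.cons ha' SimpleGraph.Walk.nil, by
        intro u hu
        simp only [SimpleGraph.Walk.support_cons, SimpleGraph.Walk.support_nil,
          List.mem_cons, List.mem_singleton] at hu
        rcases hu with rfl | hu
        · exact a.2
        · rcases hu with rfl | h
          · exact m.2
          · simp at h⟩ ih

lemma induce_reachable_of_reachAvoid {K : Set G} :
    ∀ {x y : G} (q : (cayley S).Walk x y) (hq : ∀ v ∈ q.support, v ∉ K),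
      ((cayley S).induce Kᶜ).Reachable ⟨x, hq x q.start_mem_support⟩ ⟨y, hq y q.end_mem_support⟩ := by
  intro x y q
  induction q with
  | nil => intro hq; exact SimpleGraph.Reachable.refl _
  | @cons x m y ha q ih =>
      intro hq
      have hm : m ∉ K := hq m (by simp)
      have h1 : ((cayley S).induce Kᶜ).Adj ⟨x, hq x (SimpleGraph.Walk.cons ha q).start_mem_support⟩
          ⟨m, hm⟩ := ha
      have h2 := ih (fun v hv => hq v (by simp [hv]))
      exact h1.reachable.trans h2

/-- Pigeonhole refinement: inside an infinite set closed underavoidance of the ball of radius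
`n`, there is an infinite `ReachAvoid`-class. -/
lemma exists_infinite_class (hS : S.Finite) (hgen : Subgroup.closure S = ⊤) {n : ℕ}
    {C : Set G} (hC : C.Infinite)
    (hclosed : ∀ u ∈ C, ∀ w, ReachAvoid (cayley S) (ball S n 1) w u → w ∈ C) :
    ∃ v₀ ∈ C, v₀ ∉ ball S n 1 ∧ {u | ReachAvoid (cayley S) (ball S n 1) u v₀}.Infinite ∧
      {u | ReachAvoid (cayley S) (ball S n 1) u v₀} ⊆ C := by
  set K := ball S n (1 : G) with hKdef
  have hKfin : K.Finite := ball_finite hS hgen n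
  have hFfin : {v : G | v ∉ K ∧ ∃ z ∈ K, (cayley S).Adj v z}.Finite := by
    refine (hKfin.mul ((hS.union hS.inv))).subset ?_
    rintro v ⟨hv, z, hz, hadj⟩
    refine ⟨z, hz, z⁻¹ * v, ?_, by group⟩
    rcases (cayley_adj.mp hadj).2 with hs | hs
    · right; simpa using Set.inv_mem_inv.mpr hs
    · left; exact hs
  have hcover : ∀ u ∈ C \ K, ∃ v, (v ∉ K ∧ ∃ z ∈ K, (cayley S).Adj v z) ∧
      ReachAvoid (cayley S) K u v := by
    rintro u ⟨huC, huK⟩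
    obtain ⟨p⟩ := (cayley_connected hgen) u 1
    obtain ⟨v, z, hv, hz, hadj, hr⟩ := trunc (one_mem_ball n) p huK
    exact ⟨v, ⟨hv, z, hz, hadj⟩, hr⟩
  have hCK : (C \ K).Infinite := hC.diff hKfin
  have hmain : ∃ v₀, (v₀ ∉ K ∧ ∃ z ∈ K, (cayley S).Adj v₀ z) ∧
      {u | u ∈ C \ K ∧ ReachAvoid (cayley S) K u v₀}.Infinite := by
    by_contra hcon
    push_neg at hcon
    have hsub : C \ K ⊆ ⋃ v ∈ {v : G | v ∉ K ∧ ∃ z ∈ K, (cayley S).Adj v z},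
        {u | u ∈ C \ K ∧ ReachAvoid (cayley S) K u v} := by
      intro u hu
      obtain ⟨v, hvF, hr⟩ := hcover u hu
      exact Set.mem_biUnion hvF ⟨hu, hr⟩
    have hfin : (C \ K).Finite := by
      refine (Set.Finite.biUnion hFfin (fun v hv => ?_)).subset hsub
      exact hcon v hv
    exact hCK hfin
  obtain ⟨v₀, hvF, hinf⟩ := hmain
  obtain ⟨u₀, hu₀⟩ := hinf.nonempty
  have hv₀C : v₀ ∈ C := hclosed u₀ hu₀.1.1 v₀ hu₀.2.symm
  refine ⟨v₀, hv₀C, hvF.1, hinf.mono (fun u hu => hu.2), fun u hu => hclosed v₀ hv₀C u hu⟩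

end Ends

/-- a finitely generated group with at least two ends has `n`-axial elements for
all sufficiently large `n`. -/
theorem stmt7 {G : Type*} [Group G] (S : Finset G)
    (hsym : ∀ s ∈ S, s⁻¹ ∈ S) (hgen : Subgroup.closure (S : Set G) = ⊤)
    (h2 : TwoEnds (S : Set G)) :
    ∃ N : ℕ, ∀ n : ℕ, N ≤ n → ∃ g : G, IsAxial (S : Set G) n g := by
  classical
  obtain ⟨n₀, C₁, C₂, hne, h1inf, h2inf⟩ := h2
  have hS : (S : Set G).Finite := S.finite_toSet
  refine ⟨n₀, fun n hn => ?_⟩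
  set K := ball (S : Set G) n (1 : G) with hKdef
  have hK₀K : ball (S : Set G) n₀ (1 : G) ⊆ K := ball_mono hn
  set D₁ : Set G := Subtype.val '' C₁.supp with hD₁def
  set D₂ : Set G := Subtype.val '' C₂.supp with hD₂def
  have hD₁inf : D₁.Infinite := h1inf.image (Set.injOn_of_injective Subtype.val_injective)
  have hD₂inf : D₂.Infinite := h2inf.image (Set.injOn_of_injective Subtype.val_injective)
  have hclosed : ∀ (C : ((cayley (S : Set G)).induce (ball (S : Set G) n₀ (1 : G))ᶜ).ConnectedComponent),
      ∀ u ∈ Subtype.val '' C.supp, ∀ w, ReachAvoid (cayley (S : Set G)) K w u →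
        w ∈ Subtype.val '' C.supp := by
    rintro C u ⟨a, ha, rfl⟩ w hw
    obtain ⟨q, hq⟩ := hw.mono hK₀K
    have hreach := induce_reachable_of_reachAvoid q hq
    have hsound := SimpleGraph.ConnectedComponent.sound hreach
    rw [SimpleGraph.ConnectedComponent.mem_supp_iff] at ha
    have : (⟨(a : G), hq _ q.end_mem_support⟩ : ↥((ball (S : Set G) n₀ (1 : G))ᶜ)) = a := Subtype.ext rfl
    rw [this, ha] at hsound
    exact ⟨_, (SimpleGraph.ConnectedComponent.mem_supp_iff _ _).mpr hsound, rfl⟩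
  have hdisj : ∀ u, u ∈ D₁ → u ∈ D₂ → False := by
    rintro u ⟨a, ha, rfl⟩ ⟨b, hb, he⟩
    have : b = a := Subtype.val_injective he
    subst this
    rw [SimpleGraph.ConnectedComponent.mem_supp_iff] at ha hb
    exact hne (ha ▸ hb)
  obtain ⟨v₁, hv₁D, hv₁K, hCl₁inf, hCl₁sub⟩ :=
    exists_infinite_class hS hgen hD₁inf (hclosed C₁)
  obtain ⟨v₂, hv₂D, hv₂K, hCl₂inf, hCl₂sub⟩ :=
    exists_infinite_class hS hgen hD₂inf (hclosed C₂)
  have hnR : ¬ ReachAvoid (cayley (S : Set G)) K v₁ v₂ := by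
    intro hR
    exact hdisj v₂ (hCl₁sub hR.symm) hv₂D
  have hgood : ∃ g : G, 2 * n < (cayley (S : Set G)).dist 1 g ∧
      ¬ ReachAvoid (cayley (S : Set G)) K g g⁻¹ := by
    by_contra hcon
    push_neg at hcon
    obtain ⟨h, hhCl, hhfar⟩ := exists_far hCl₁inf hS hgen (2 * n)
    obtain ⟨k, hkCl, hkfar⟩ := exists_far hCl₂inf hS hgen ((cayley (S : Set G)).dist 1 h + 2 * n)
    have hRhv : ReachAvoid (cayley (S : Set G)) K h v₁ := hhCl
    have hRkv : ReachAvoid (cayley (S : Set G)) K k v₂ := hkCl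
    have hRhk : ¬ ReachAvoid (cayley (S : Set G)) K h k := by
      intro hR
      exact hnR (hRhv.symm.trans (hR.trans hRkv))
    have hdkfar : 2 * n < (cayley (S : Set G)).dist 1 k := by
      have := hkfar; omega
    have hdhk : 2 * n < (cayley (S : Set G)).dist h k := by
      have htri := (cayley_connected hgen).dist_triangle (u := (1 : G)) (v := h) (w := k)
      omega
    have hdm : (cayley (S : Set G)).dist 1 (h⁻¹ * k) = (cayley (S : Set G)).dist h k := by
      have := cayley_dist_smul (S := (S : Set G)) h 1 (h⁻¹ * k)
      simpa using this.symm
    have hknot : k ∉ h • K := by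
      intro hmem
      have : (cayley (S : Set G)).dist h k ≤ n := mem_smul_ball_iff.mp hmem
      omega
    have hhnot : h ∉ k • K := by
      intro hmem
      have : (cayley (S : Set G)).dist k h ≤ n := mem_smul_ball_iff.mp hmem
      rw [SimpleGraph.dist_comm (u := k) (v := h)] at this
      omega
    have sw1 := swallow hgen hhfar k hknot (Or.inr (fun r => hRhk r.symm))
    have sw2 := swallow hgen hdkfar h hhnot (Or.inr hRhk)
    have R1 : ReachAvoid (cayley (S : Set G)) K (h⁻¹ * k) h⁻¹ := by
      refine (reachAvoid_smul_iff h).mp ?_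
      have e1 : h * (h⁻¹ * k) = k := by group
      have e2 : h * h⁻¹ = (1 : G) := by group
      rw [e1, e2]; exact sw1
    have R2 : ReachAvoid (cayley (S : Set G)) K (k⁻¹ * h) k⁻¹ := by
      refine (reachAvoid_smul_iff k).mp ?_
      have e1 : k * (k⁻¹ * h) = h := by group
      have e2 : k * k⁻¹ = (1 : G) := by group
      rw [e1, e2]; exact sw2
    have Rhh := hcon h hhfar
    have Rkk := hcon k hdkfar
    have Rmm := hcon (h⁻¹ * k) (by rw [hdm]; exact hdhk)
    have hminv : (h⁻¹ * k)⁻¹ = k⁻¹ * h := by group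
    rw [hminv] at Rmm
    have Rmh : ReachAvoid (cayley (S : Set G)) K (h⁻¹ * k) h := R1.trans Rhh.symm
    have Rm'k : ReachAvoid (cayley (S : Set G)) K (k⁻¹ * h) k := R2.trans Rkk.symm
    exact hRhk (Rmh.symm.trans (Rmm.trans Rm'k))
  obtain ⟨g, hgfar, hgng⟩ := hgood
  exact ⟨g, isAxial_of hgen hgfar hgng⟩
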